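/- arXiv:1903.07921 — 2 statements merged into one kernel-verified Lean document; each statement's English description precedes it below -/
import Mathlib

section
/- Let R and S be rings, M a Frobenius S-R-bimodule, and N = Hom_S(M,S) the associated R-S-bimodule. Then for every i ≥ 0, every left R-module X and every left S-module Y there are isomorphisms of abelian groups Ext^i_S(M ⊗_R X, Y) ≅ Ext^i_R(X, N ⊗_S Y) and Ext^i_R(N ⊗_S Y, X) ≅ Ext^i_S(Y, M ⊗_R X). -/
/-!
Statement 4: Let `M` be a Frobenius `S`-`R`-bimodule with `N = Hom_S(M, S)`.  Then for all
`i ≥ 0`, all left `R`-modules `X` and all left `S`-modules `Y` there are isomorphisms of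
abelian groups `Ext^i_S(M ⊗_R X, Y) ≅ Ext^i_R(X, N ⊗_S Y)` and
`Ext^i_R(N ⊗_S Y, X) ≅ Ext^i_S(Y, M ⊗_R X)`.
-/

universe u
open MulOpposite CategoryTheory
section FrobeniusBimodule

variable (S R M : Type u) [Ring S] [Ring R] [AddCommGroup M]
  [Module S M] [Module Rᵐᵒᵖ M] [SMulCommClass S Rᵐᵒᵖ M] [SMulCommClass Rᵐᵒᵖ S M]

/-- The right action of `r : R` on the `S`-`R`-bimodule `M`, as an `S`-linear map. -/
def ract (r : R) : M →ₗ[S] M where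
  toFun m := op r • m
  map_add' _ _ := smul_add _ _ _
  map_smul' s m := smul_comm (op r) s m

/-- The left action of `s : S` on the `S`-`R`-bimodule `M`, as a right `R`-linear map. -/
def lact (s : S) : M →ₗ[Rᵐᵒᵖ] M where
  toFun m := s • m
  map_add' _ _ := smul_add _ _ _
  map_smul' r m := smul_comm s r m

/-- Left multiplication by `r : R` on `R`, as a right `R`-linear map. -/
def mulLeft' (r : R) : R →ₗ[Rᵐᵒᵖ] R where
  toFun x := r * x
  map_add' := mul_add r
  map_smul' a x := by
    simp only [MulOpposite.smul_eq_mul_unop, RingHom.id_apply, mul_assoc]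

/-- An `S`-`R`-bimodule `M` is a Frobenius bimodule if it is finitely generated projective
as a left `S`-module and as a right `R`-module, and `Hom_S(M, S) ≅ Hom_{Rᵒᵖ}(M, R)` as
`R`-`S`-bimodules.  Here `Hom_S(M, S)` is an `R`-`S`-bimodule via `(r • f • s) m = f (m r) s`,
and `Hom_{Rᵒᵖ}(M, R)` is an `R`-`S`-bimodule via `(r • g • s) m = r * g (s • m)`; the
bimodule conditions on the additive isomorphism `e` are stated via the two compatibilities
below. -/
def IsFrobeniusBimodule : Prop :=
  Module.Finite S M ∧ Module.Projective S M ∧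
  Module.Finite Rᵐᵒᵖ M ∧ Module.Projective Rᵐᵒᵖ M ∧
  ∃ e : (M →ₗ[S] S) ≃+ (M →ₗ[Rᵐᵒᵖ] R),
    (∀ (r : R) (f : M →ₗ[S] S), e (f ∘ₗ ract S R M r) = mulLeft' R r ∘ₗ e f) ∧
    (∀ (s : S) (f : M →ₗ[S] S),
      e (LinearMap.toSpanSingleton S S s ∘ₗ f) = e f ∘ₗ lact S R M s)

variable (Y : Type u) [AddCommGroup Y] [Module S Y]

/-- `Hom_S(M, Y)` is a left `R`-module via the right action of `R` on `M`:
`(r • f) m = f (m r)`. -/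
instance homLeftModule : Module R (M →ₗ[S] Y) where
  smul r f := f ∘ₗ ract S R M r
  one_smul f := by ext m; show f _ = f m; simp [ract]
  mul_smul r r' f := by ext m; show f _ = f _; simp [ract, op_mul, mul_smul]
  smul_zero r := rfl
  smul_add r f g := rfl
  add_smul r r' f := by ext m; show f _ = f _ + f _; simp [ract, op_add, add_smul, map_add]
  zero_smul f := by ext m; show f _ = 0; simp [ract]

/-- The left `R`-action on `Hom_S(M, Y)` through the domain commutes with any compatible
action on the codomain. -/
instance homActionsComm (T : Type u) [Ring T] [Module T Y] [SMulCommClass S T Y] :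
    SMulCommClass T R (M →ₗ[S] Y) :=
  ⟨fun _ _ _ => rfl⟩

end FrobeniusBimodule
section NCTensor

variable (R : Type u) [Ring R] (M : Type u) [AddCommGroup M] [Module Rᵐᵒᵖ M]
  (X : Type u) [AddCommGroup X] [Module R X]
  (S : Type u) [Ring S] [Module S M] [SMulCommClass Rᵐᵒᵖ S M]

/-- The submodule of balanced relations in `M ⊗[ℤ] X`, where `M` is an `S`-`R`-bimodule
and `X` a left `R`-module.  Since the generating set is stable under the action of `S`,
its `S`-span coincides with its additive span. -/
def balS : Submodule S (TensorProduct ℤ M X) :=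
  Submodule.span S
    {z | ∃ (m : M) (r : R) (x : X), z = m ⊗ₜ[ℤ] (r • x) - ((op r) • m) ⊗ₜ[ℤ] x}

/-- The tensor product `M ⊗_R X` over the (possibly noncommutative) ring `R`, for a right
`R`-module `M` and a left `R`-module `X`: the quotient of `M ⊗[ℤ] X` by the balanced
relations.  When `M` is an `S`-`R`-bimodule this is a left `S`-module. -/
def NCT := (TensorProduct ℤ M X) ⧸ balS R M X S

noncomputable instance : AddCommGroup (NCT R M X S) :=
  inferInstanceAs (AddCommGroup ((TensorProduct ℤ M X) ⧸ balS R M X S))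

noncomputable instance : Module S (NCT R M X S) :=
  inferInstanceAs (Module S ((TensorProduct ℤ M X) ⧸ balS R M X S))

/-- The class of the pure tensor `m ⊗ x` in `M ⊗_R X`. -/
noncomputable def mkT (m : M) (x : X) : NCT R M X S :=
  Submodule.Quotient.mk (m ⊗ₜ[ℤ] x)

end NCTensor

set_option linter.unusedSectionVars false
section NCTapi

variable {R : Type u} [Ring R] {M : Type u} [AddCommGroup M] [Module Rᵐᵒᵖ M]
  {X : Type u} [AddCommGroup X] [Module R X]
  {S : Type u} [Ring S] [Module S M] [SMulCommClass Rᵐᵒᵖ S M]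

lemma mkT_add_left (m m' : M) (x : X) :
    mkT R M X S (m + m') x = mkT R M X S m x + mkT R M X S m' x := by
  simp [mkT, TensorProduct.add_tmul]
  rfl

lemma mkT_add_right (m : M) (x x' : X) :
    mkT R M X S m (x + x') = mkT R M X S m x + mkT R M X S m x' := by
  simp [mkT, TensorProduct.tmul_add]
  rfl

lemma mkT_smul (s : S) (m : M) (x : X) :
    mkT R M X S (s • m) x = s • mkT R M X S m x := by
  rw [mkT, mkT]
  change (Submodule.Quotient.mk ((s • m) ⊗ₜ[ℤ] x) : TensorProduct ℤ M X ⧸ balS R M X S)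
    = s • (Submodule.Quotient.mk (m ⊗ₜ[ℤ] x) : TensorProduct ℤ M X ⧸ balS R M X S)
  rw [← Submodule.Quotient.mk_smul, TensorProduct.smul_tmul']

lemma mkT_rel (m : M) (r : R) (x : X) :
    mkT R M X S m (r • x) = mkT R M X S (op r • m) x := by
  rw [mkT, mkT]
  change (Submodule.Quotient.mk _ : TensorProduct ℤ M X ⧸ balS R M X S) = Submodule.Quotient.mk _
  rw [Submodule.Quotient.eq]
  exact Submodule.subset_span ⟨m, r, x, rfl⟩

lemma mkT_zero_left (x : X) : mkT R M X S 0 x = 0 := by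
  simp [mkT]
  rfl

lemma mkT_zero_right (m : M) : mkT R M X S m 0 = 0 := by
  simp [mkT]
  rfl

lemma mkT_sum_left {ι : Type} (t : Finset ι) (v : ι → M) (x : X) :
    mkT R M X S (∑ j ∈ t, v j) x = ∑ j ∈ t, mkT R M X S (v j) x :=
  map_sum (AddMonoidHom.mk' (fun m => mkT R M X S m x)
    (fun a b => mkT_add_left a b x)) v t

/-- Induction principle for `NCT`. -/
lemma NCT.ind {P : NCT R M X S → Prop} (h0 : P 0)
    (hmk : ∀ m x, P (mkT R M X S m x))
    (hadd : ∀ a b, P a → P b → P (a + b)) : ∀ z, P z := by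
  intro z
  obtain ⟨t, rfl⟩ := Submodule.Quotient.mk_surjective _ z
  induction t using TensorProduct.induction_on with
  | zero => exact h0
  | tmul m x => exact hmk m x
  | add a b ha hb => rw [Submodule.Quotient.mk_add]; exact hadd _ _ ha hb

section lift
variable {P : Type u} [AddCommGroup P] [Module S P]

/-- Auxiliary ℤ-bilinear map for `NCT.lift`. -/
noncomputable def NCT.liftAux (b : M →+ X →+ P) : TensorProduct ℤ M X →ₗ[ℤ] P :=
  TensorProduct.lift
    { toFun := fun m => (b m).toIntLinearMap
      map_add' := fun m m' => by ext x; simp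
      map_smul' := fun z m => by ext x; simp }

@[simp] lemma NCT.liftAux_tmul (b : M →+ X →+ P) (m : M) (x : X) :
    NCT.liftAux b (m ⊗ₜ[ℤ] x) = b m x := rfl

/-- Lift a balanced bilinear map to `NCT`. -/
noncomputable def NCT.lift (b : M →+ X →+ P)
    (hS : ∀ (s : S) (m : M) (x : X), b (s • m) x = s • b m x)
    (hR : ∀ (m : M) (r : R) (x : X), b m (r • x) = b (op r • m) x) :
    NCT R M X S →ₗ[S] P :=
  Submodule.liftQ _
    { toFun := NCT.liftAux b
      map_add' := (NCT.liftAux b).map_add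
      map_smul' := fun s t => by
        induction t using TensorProduct.induction_on with
        | zero => simp
        | tmul m x =>
            show NCT.liftAux b ((s : S) • m ⊗ₜ[ℤ] x) = s • NCT.liftAux b (m ⊗ₜ[ℤ] x)
            rw [TensorProduct.smul_tmul', NCT.liftAux_tmul, NCT.liftAux_tmul, hS]
        | add a c ha hc =>
            rw [RingHom.id_apply] at ha hc ⊢
            show NCT.liftAux b (s • (a + c)) = s • NCT.liftAux b (a + c)
            rw [smul_add, map_add, map_add, smul_add]
            exact congrArg₂ (· + ·) ha hc }
    (by
      rw [balS, Submodule.span_le]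
      rintro z ⟨m, r, x, rfl⟩
      simp only [SetLike.mem_coe, LinearMap.mem_ker]
      show NCT.liftAux b _ = 0
      rw [map_sub, NCT.liftAux_tmul, NCT.liftAux_tmul, hR, sub_self])

@[simp] lemma NCT.lift_mkT (b : M →+ X →+ P) (hS hR) (m : M) (x : X) :
    NCT.lift b hS hR (mkT R M X S m x) = b m x := rfl

lemma NCT.hom_ext {f g : NCT R M X S →ₗ[S] P}
    (h : ∀ m x, f (mkT R M X S m x) = g (mkT R M X S m x)) : f = g := by
  ext z
  induction z using NCT.ind with
  | h0 => simp
  | hmk m x => exact h m x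
  | hadd a c ha hc => rw [map_add, map_add, ha, hc]

end lift

end NCTapi

/-- Dual basis for a finitely generated projective module. -/
lemma exists_dual_basis (A P : Type u) [Ring A] [AddCommGroup P] [Module A P]
    [Module.Finite A P] [Module.Projective A P] :
    ∃ (n : ℕ) (x : Fin n → P) (f : Fin n → (P →ₗ[A] A)),
      ∀ p : P, ∑ j, f j p • x j = p := by
  obtain ⟨n, π, hπ⟩ := Module.Finite.exists_fin' A P
  obtain ⟨σ, hσ⟩ := Module.projective_lifting_property π LinearMap.id hπ
  refine ⟨n, fun j => π (Pi.single j 1), fun j => (LinearMap.proj j).comp σ, fun p => ?_⟩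
  have h1 : ∀ j, ((LinearMap.proj j).comp σ) p • π (Pi.single j (1 : A))
      = π (Pi.single j (σ p j)) := by
    intro j
    rw [← map_smul]
    congr 1
    ext k
    by_cases hk : k = j
    · subst hk; simp
    · simp [Pi.single_eq_of_ne hk]
  calc ∑ j, ((LinearMap.proj j).comp σ) p • π (Pi.single j (1 : A))
      = ∑ j, π (Pi.single j (σ p j)) := by simp_rw [h1]
    _ = π (∑ j, Pi.single j (σ p j)) := by rw [map_sum]
    _ = π (σ p) := by rw [Finset.univ_sum_single]
    _ = p := by
        have := LinearMap.congr_fun hσ p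
        simpa using this
set_option linter.unusedVariables false
section NCTmapSec

variable {R : Type u} [Ring R] {M : Type u} [AddCommGroup M] [Module Rᵐᵒᵖ M]
  {S : Type u} [Ring S] [Module S M] [SMulCommClass Rᵐᵒᵖ S M]

/-- `mkT` as a bilinear map. -/
noncomputable def mkTbil (X : Type u) [AddCommGroup X] [Module R X] :
    M →+ X →+ NCT R M X S where
  toFun m :=
    { toFun := fun x => mkT R M X S m x
      map_zero' := mkT_zero_right m
      map_add' := mkT_add_right m }
  map_zero' := by ext x; exact mkT_zero_left x
  map_add' m m' := by ext x; exact mkT_add_left m m' x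

@[simp] lemma mkTbil_apply (X : Type u) [AddCommGroup X] [Module R X] (m : M) (x : X) :
    mkTbil (S := S) X m x = mkT R M X S m x := rfl

variable {X X' : Type u} [AddCommGroup X] [Module R X] [AddCommGroup X'] [Module R X']

/-- Functoriality of `NCT` in the second variable. -/
noncomputable def NCTmap (f : X →ₗ[R] X') : NCT R M X S →ₗ[S] NCT R M X' S :=
  NCT.lift
    { toFun := fun m => (mkTbil X' m).comp f.toAddMonoidHom
      map_zero' := by ext x; simp
      map_add' := fun m m' => by ext x; simp [mkT_add_left] }
    (fun s m x => by simp [mkT_smul])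
    (fun m r x => by simp [mkT_rel])

@[simp] lemma NCTmap_mkT (f : X →ₗ[R] X') (m : M) (x : X) :
    NCTmap (S := S) f (mkT R M X S m x) = mkT R M X' S m (f x) := rfl

end NCTmapSec

section Functors

variable (S R M : Type u) [Ring S] [Ring R] [AddCommGroup M]
  [Module S M] [Module Rᵐᵒᵖ M] [SMulCommClass S Rᵐᵒᵖ M] [SMulCommClass Rᵐᵒᵖ S M]

/-- The functor `M ⊗_R -`. -/
noncomputable def Ftor : ModuleCat.{u} R ⥤ ModuleCat.{u} S where
  obj X := ModuleCat.of S (NCT R M X S)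
  map f := ModuleCat.ofHom (NCTmap f.hom)
  map_id X := ModuleCat.hom_ext (NCT.hom_ext (fun m x => rfl))
  map_comp f g := ModuleCat.hom_ext (NCT.hom_ext (fun m x => rfl))

/-- The functor `N ⊗_S -` where `N = Hom_S(M, S)`. -/
noncomputable def Gtor : ModuleCat.{u} S ⥤ ModuleCat.{u} R where
  obj Y := ModuleCat.of R (NCT S (M →ₗ[S] S) Y R)
  map g := ModuleCat.ofHom (NCTmap g.hom)
  map_id Y := ModuleCat.hom_ext (NCT.hom_ext (fun f y => rfl))
  map_comp f g := ModuleCat.hom_ext (NCT.hom_ext (fun f y => rfl))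

instance : (Ftor S R M).Additive where
  map_add {X Y f g} := ModuleCat.hom_ext (NCT.hom_ext (fun m x => by
    show NCTmap (f + g).hom (mkT R M X S m x)
      = NCTmap f.hom (mkT R M X S m x) + NCTmap g.hom (mkT R M X S m x)
    rw [NCTmap_mkT, NCTmap_mkT, NCTmap_mkT, ModuleCat.hom_add, LinearMap.add_apply,
      mkT_add_right]))

instance : (Gtor S R M).Additive where
  map_add {X Y f g} := ModuleCat.hom_ext (NCT.hom_ext (fun h y => by
    show NCTmap (f + g).hom (mkT S (M →ₗ[S] S) X R h y)
      = NCTmap f.hom (mkT S (M →ₗ[S] S) X R h y) + NCTmap g.hom (mkT S (M →ₗ[S] S) X R h y)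
    rw [NCTmap_mkT, NCTmap_mkT, NCTmap_mkT, ModuleCat.hom_add, LinearMap.add_apply,
      mkT_add_right]))

end Functors
section Adj1

variable {S R M : Type u} [Ring S] [Ring R] [AddCommGroup M]
  [Module S M] [Module Rᵐᵒᵖ M] [SMulCommClass S Rᵐᵒᵖ M] [SMulCommClass Rᵐᵒᵖ S M]

section TTH
variable (S R M)
variable (Y : Type u) [AddCommGroup Y] [Module S Y]

/-- The canonical map `N ⊗_S Y → Hom_S(M, Y)`. -/
noncomputable def tensorToHom : NCT S (M →ₗ[S] S) Y R →ₗ[R] (M →ₗ[S] Y) :=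
  NCT.lift
    { toFun := fun f => AddMonoidHom.mk'
        (fun y => (LinearMap.toSpanSingleton S Y y).comp f)
        (fun y y' => LinearMap.ext fun m => by
          simp [LinearMap.toSpanSingleton, add_smul])
      map_zero' := by ext y m; simp
      map_add' := fun f f' => by ext y m; simp [add_smul] }
    (fun r f y => LinearMap.ext fun m => rfl)
    (fun f s y => LinearMap.ext fun m => by
      show (f m) • (s • y) = ((op s • f) m) • y
      rw [LinearMap.smul_apply, MulOpposite.smul_eq_mul_unop, unop_op, mul_smul])

@[simp] lemma tensorToHom_mkT (f : M →ₗ[S] S) (y : Y) (m : M) :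
    tensorToHom S R M Y (mkT S (M →ₗ[S] S) Y R f y) m = f m • y := rfl

variable {Y} in
lemma tensorToHom_nat {Y' : Type u} [AddCommGroup Y'] [Module S Y'] (v : Y →ₗ[S] Y')
    (z : NCT S (M →ₗ[S] S) Y R) :
    tensorToHom S R M Y' (NCTmap v z) = v.comp (tensorToHom S R M Y z) := by
  induction z using NCT.ind with
  | h0 => simp
  | hmk f y => exact LinearMap.ext fun m => by simp
  | hadd a b ha hb => simp only [map_add, LinearMap.comp_add, ha, hb]

end TTH

section DualBasis
variable (nn : ℕ) (mm : Fin nn → M) (ff : Fin nn → (M →ₗ[S] S))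
variable (Y : Type u) [AddCommGroup Y] [Module S Y]

/-- The inverse of `tensorToHom`, defined using a dual basis. -/
noncomputable def invT (g : M →ₗ[S] Y) : NCT S (M →ₗ[S] S) Y R :=
  ∑ j, mkT S (M →ₗ[S] S) Y R (ff j) (g (mm j))

lemma invT_add (g g' : M →ₗ[S] Y) :
    invT (R := R) nn mm ff Y (g + g') = invT (R := R) nn mm ff Y g + invT (R := R) nn mm ff Y g' := by
  rw [invT, invT, invT, ← Finset.sum_add_distrib]
  exact Finset.sum_congr rfl fun j _ => by rw [LinearMap.add_apply, mkT_add_right]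

lemma tensorToHom_invT (hd : ∀ m : M, ∑ j, ff j m • mm j = m) (g : M →ₗ[S] Y) :
    tensorToHom S R M Y (invT nn mm ff Y g) = g := by
  refine LinearMap.ext fun m => ?_
  rw [invT, map_sum]
  have h1 : ∀ j ∈ Finset.univ, (tensorToHom S R M Y
      (mkT S (M →ₗ[S] S) Y R (ff j) (g (mm j)))) m = g (ff j m • mm j) := by
    intro j _
    rw [tensorToHom_mkT, map_smul]
  rw [LinearMap.sum_apply, Finset.sum_congr rfl h1, ← map_sum]
  exact congrArg g (hd m)

lemma invT_tensorToHom (hd : ∀ m : M, ∑ j, ff j m • mm j = m)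
    (z : NCT S (M →ₗ[S] S) Y R) :
    invT nn mm ff Y (tensorToHom S R M Y z) = z := by
  induction z using NCT.ind with
  | h0 =>
      rw [map_zero, invT]
      exact Finset.sum_eq_zero fun j _ => by rw [LinearMap.zero_apply, mkT_zero_right]
  | hmk f y =>
      rw [invT]
      have h1 : ∀ j ∈ Finset.univ, mkT S (M →ₗ[S] S) Y R (ff j)
          ((tensorToHom S R M Y (mkT S (M →ₗ[S] S) Y R f y)) (mm j))
          = mkT S (M →ₗ[S] S) Y R (op (f (mm j)) • ff j) y := by
        intro j _
        rw [tensorToHom_mkT, mkT_rel]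
      rw [Finset.sum_congr rfl h1, ← mkT_sum_left]
      congr 1
      refine LinearMap.ext fun m => ?_
      rw [LinearMap.coe_sum, Finset.sum_apply]
      have h2 : ∀ j ∈ Finset.univ, (op (f (mm j)) • ff j) m = f (ff j m • mm j) := by
        intro j _
        rw [LinearMap.smul_apply, MulOpposite.smul_eq_mul_unop, unop_op, map_smul,
          smul_eq_mul]
      rw [Finset.sum_congr rfl h2, ← map_sum]
      exact congrArg f (hd m)
  | hadd a b ha hb =>
      rw [map_add, invT_add, ha, hb]

lemma tensorToHom_injective (hd : ∀ m : M, ∑ j, ff j m • mm j = m) :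
    Function.Injective (tensorToHom S R M Y) :=
  Function.LeftInverse.injective (invT_tensorToHom nn mm ff Y hd)

/-- `N ⊗_S Y ≅ Hom_S(M, Y)` as `R`-modules. -/
noncomputable def homLinEquiv (hd : ∀ m : M, ∑ j, ff j m • mm j = m) :
    NCT S (M →ₗ[S] S) Y R ≃ₗ[R] (M →ₗ[S] Y) :=
  LinearEquiv.ofBijective (tensorToHom S R M Y)
    ⟨tensorToHom_injective nn mm ff Y hd,
     fun g => ⟨invT nn mm ff Y g, tensorToHom_invT nn mm ff Y hd g⟩⟩

end DualBasis

section Curry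
variable (S R M)
variable (X : Type u) [AddCommGroup X] [Module R X]
  (Y : Type u) [AddCommGroup Y] [Module S Y]

/-- Currying for the tensor product `M ⊗_R X`. -/
noncomputable def curryNCT (g : NCT R M X S →ₗ[S] Y) : X →ₗ[R] (M →ₗ[S] Y) where
  toFun x :=
    { toFun := fun m => g (mkT R M X S m x)
      map_add' := fun m m' => by
        show g (mkT R M X S (m + m') x) = g (mkT R M X S m x) + g (mkT R M X S m' x)
        rw [mkT_add_left, map_add]
      map_smul' := fun s m => by
        show g (mkT R M X S (s • m) x) = s • g (mkT R M X S m x)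
        rw [mkT_smul, map_smul] }
  map_add' x x' := LinearMap.ext fun m => by
    show g (mkT R M X S m (x + x')) = g (mkT R M X S m x) + g (mkT R M X S m x')
    rw [mkT_add_right, map_add]
  map_smul' r x := LinearMap.ext fun m => by
    show g (mkT R M X S m (r • x)) = g (mkT R M X S (op r • m) x)
    rw [mkT_rel]

/-- Uncurrying for the tensor product `M ⊗_R X`. -/
noncomputable def uncurryNCT (h : X →ₗ[R] (M →ₗ[S] Y)) : NCT R M X S →ₗ[S] Y :=
  NCT.lift
    { toFun := fun m => AddMonoidHom.mk' (fun x => h x m)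
        (fun x x' => by
          show h (x + x') m = h x m + h x' m
          rw [map_add]; rfl)
      map_zero' := by ext x; exact (h x).map_zero
      map_add' := fun m m' => by ext x; exact (h x).map_add m m'
    }
    (fun s m x => (h x).map_smul s m)
    (fun m r x => by
      show h (r • x) m = h x (op r • m)
      rw [map_smul]; rfl)

end Curry

section HomEquiv1
variable (nn : ℕ) (mm : Fin nn → M) (ff : Fin nn → (M →ₗ[S] S))
  (hd : ∀ m : M, ∑ j, ff j m • mm j = m)
variable (X : Type u) [AddCommGroup X] [Module R X]
  (Y : Type u) [AddCommGroup Y] [Module S Y]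

/-- The adjunction hom-set bijection for `M ⊗_R - ⊣ N ⊗_S -`. -/
noncomputable def homEquiv1 (hd : ∀ m : M, ∑ j, ff j m • mm j = m) :
    (NCT R M X S →ₗ[S] Y) ≃ (X →ₗ[R] NCT S (M →ₗ[S] S) Y R) where
  toFun g := ((homLinEquiv nn mm ff Y hd).symm.toLinearMap).comp (curryNCT S R M X Y g)
  invFun h := uncurryNCT S R M X Y
    (((homLinEquiv (R := R) nn mm ff Y hd).toLinearMap).comp h)
  left_inv g := NCT.hom_ext fun m x => by
    show (homLinEquiv nn mm ff Y hd) ((homLinEquiv nn mm ff Y hd).symm (curryNCT S R M X Y g x)) m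
      = g (mkT R M X S m x)
    rw [LinearEquiv.apply_symm_apply]
    rfl
  right_inv h := LinearMap.ext fun x => by
    show (homLinEquiv nn mm ff Y hd).symm
      (curryNCT S R M X Y (uncurryNCT S R M X Y
        ((homLinEquiv (R := R) nn mm ff Y hd).toLinearMap.comp h)) x) = h x
    have : curryNCT S R M X Y (uncurryNCT S R M X Y
        ((homLinEquiv (R := R) nn mm ff Y hd).toLinearMap.comp h)) x
        = (homLinEquiv nn mm ff Y hd) (h x) := LinearMap.ext fun m => rfl
    rw [this, LinearEquiv.symm_apply_apply]

end HomEquiv1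

section TheAdj1
variable (S R M)
variable (nn : ℕ) (mm : Fin nn → M) (ff : Fin nn → (M →ₗ[S] S))

/-- The adjunction `M ⊗_R - ⊣ N ⊗_S -`. -/
noncomputable def adj1 (hd : ∀ m : M, ∑ j, ff j m • mm j = m) :
    Ftor S R M ⊣ Gtor S R M :=
  Adjunction.mkOfHomEquiv
    { homEquiv := fun X Y => ModuleCat.homEquiv.trans
        ((homEquiv1 nn mm ff X.carrier Y.carrier hd).trans
          (ModuleCat.homEquiv (M := X) (N := (Gtor S R M).obj Y)).symm)
      homEquiv_naturality_left_symm := fun {X' X Y} u h =>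
        ModuleCat.hom_ext <| NCT.hom_ext fun m x' => by
        show uncurryNCT S R M X'.carrier Y.carrier _ (mkT R M X'.carrier S m x')
          = (homEquiv1 nn mm ff X.carrier Y.carrier hd).symm h.hom
              (NCTmap u.hom (mkT R M X'.carrier S m x'))
        rw [NCTmap_mkT]
        rfl
      homEquiv_naturality_right := fun {X Y Y'} g v =>
        ModuleCat.hom_ext <| LinearMap.ext fun x => by
        show (homLinEquiv nn mm ff Y'.carrier hd).symm
            (curryNCT S R M X.carrier Y'.carrier (g ≫ v).hom x)
          = NCTmap v.hom ((homLinEquiv nn mm ff Y.carrier hd).symm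
              (curryNCT S R M X.carrier Y.carrier g.hom x))
        apply tensorToHom_injective nn mm ff Y'.carrier hd
        have h1 : tensorToHom S R M Y'.carrier
            ((homLinEquiv nn mm ff Y'.carrier hd).symm
              (curryNCT S R M X.carrier Y'.carrier (g ≫ v).hom x))
            = curryNCT S R M X.carrier Y'.carrier (g ≫ v).hom x :=
          (homLinEquiv (R := R) nn mm ff Y'.carrier hd).apply_symm_apply _
        have h2 : tensorToHom S R M Y.carrier
            ((homLinEquiv nn mm ff Y.carrier hd).symm (curryNCT S R M X.carrier Y.carrier g.hom x))
            = curryNCT S R M X.carrier Y.carrier g.hom x :=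
          (homLinEquiv (R := R) nn mm ff Y.carrier hd).apply_symm_apply _
        show tensorToHom S R M Y'.carrier _ = tensorToHom S R M Y'.carrier (NCTmap v.hom _)
        rw [h1, tensorToHom_nat, h2]
        exact LinearMap.ext fun m => rfl }

end TheAdj1

end Adj1
section Adj2

variable {S R M : Type u} [Ring S] [Ring R] [AddCommGroup M]
  [Module S M] [Module Rᵐᵒᵖ M] [SMulCommClass S Rᵐᵒᵖ M] [SMulCommClass Rᵐᵒᵖ S M]

instance : SMulCommClass R Sᵐᵒᵖ (M →ₗ[S] S) :=
  SMulCommClass.symm Sᵐᵒᵖ R (M →ₗ[S] S)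

/-- `unop` as an `Rᵐᵒᵖ`-linear map. -/
def unopLinear : Rᵐᵒᵖ →ₗ[Rᵐᵒᵖ] R where
  toFun := unop
  map_add' _ _ := rfl
  map_smul' a b := by
    simp only [RingHom.id_apply, MulOpposite.smul_eq_mul_unop, smul_eq_mul, unop_mul]

variable (e : (M →ₗ[S] S) ≃+ (M →ₗ[Rᵐᵒᵖ] R))

lemma he1' (he1 : ∀ (r : R) (f : M →ₗ[S] S), e (f ∘ₗ ract S R M r) = mulLeft' R r ∘ₗ e f)
    (r : R) (f : M →ₗ[S] S) (m : M) : e (r • f) m = r * e f m := by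
  have h : r • f = f ∘ₗ ract S R M r := rfl
  rw [h, he1]
  rfl

lemma he2' (he2 : ∀ (s : S) (f : M →ₗ[S] S),
      e (LinearMap.toSpanSingleton S S s ∘ₗ f) = e f ∘ₗ lact S R M s)
    (s : S) (f : M →ₗ[S] S) (m : M) : e (op s • f) m = e f (s • m) := by
  have h : op s • f = LinearMap.toSpanSingleton S S s ∘ₗ f := LinearMap.ext fun m' => by
    show op s • f m' = f m' • s
    rw [MulOpposite.smul_eq_mul_unop, unop_op, smul_eq_mul]
  rw [h, he2]
  rfl

variable (he1 : ∀ (r : R) (f : M →ₗ[S] S), e (f ∘ₗ ract S R M r) = mulLeft' R r ∘ₗ e f)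
  (he2 : ∀ (s : S) (f : M →ₗ[S] S),
      e (LinearMap.toSpanSingleton S S s ∘ₗ f) = e f ∘ₗ lact S R M s)
variable (X : Type u) [AddCommGroup X] [Module R X]

/-- The canonical map `M ⊗_R X → Hom_R(N, X)` using the Frobenius isomorphism. -/
noncomputable def tensorToHom2 : NCT R M X S →ₗ[S] ((M →ₗ[S] S) →ₗ[R] X) :=
  NCT.lift
    { toFun := fun m => AddMonoidHom.mk'
        (fun x =>
          { toFun := fun f => e f m • x
            map_add' := fun f f' => by
              show e (f + f') m • x = e f m • x + e f' m • x
              rw [map_add, LinearMap.add_apply, add_smul]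
            map_smul' := fun r f => by
              show e (r • f) m • x = r • (e f m • x)
              rw [he1' e he1, mul_smul] })
        (fun x x' => LinearMap.ext fun f => by
          show e f m • (x + x') = e f m • x + e f m • x'
          rw [smul_add])
      map_zero' := by ext x f; show e f 0 • x = 0; rw [map_zero, zero_smul]
      map_add' := fun m m' => by
        ext x f
        show e f (m + m') • x = e f m • x + e f m' • x
        rw [map_add, add_smul] }
    (fun s m x => LinearMap.ext fun f => by
      show e f (s • m) • x = e (op s • f) m • x
      rw [he2' e he2])
    (fun m r x => LinearMap.ext fun f => by
      show e f m • (r • x) = e f (op r • m) • x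
      rw [map_smul, MulOpposite.smul_eq_mul_unop, unop_op, mul_smul])

@[simp] lemma tensorToHom2_mkT (m : M) (x : X) (f : M →ₗ[S] S) :
    tensorToHom2 e he1 he2 X (mkT R M X S m x) f = e f m • x := rfl

lemma tensorToHom2_nat {X' : Type u} [AddCommGroup X'] [Module R X'] (v : X →ₗ[R] X')
    (z : NCT R M X S) (f : M →ₗ[S] S) :
    tensorToHom2 e he1 he2 X' (NCTmap v z) f = v (tensorToHom2 e he1 he2 X z f) := by
  induction z using NCT.ind with
  | h0 => simp
  | hmk m x => rw [NCTmap_mkT, tensorToHom2_mkT, tensorToHom2_mkT, map_smul]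
  | hadd a b ha hb =>
      rw [map_add, map_add, LinearMap.add_apply, ha, hb, map_add,
        LinearMap.add_apply, map_add]

variable (kk : ℕ) (pp : Fin kk → M) (gg : Fin kk → (M →ₗ[Rᵐᵒᵖ] Rᵐᵒᵖ))

/-- Inverse to `tensorToHom2` via a dual basis for `M` over `Rᵐᵒᵖ`. -/
noncomputable def invT2 (g : (M →ₗ[S] S) →ₗ[R] X) : NCT R M X S :=
  ∑ j, mkT R M X S (pp j) (g (e.symm ((unopLinear (R := R)) ∘ₗ gg j)))

lemma invT2_add (g g' : (M →ₗ[S] S) →ₗ[R] X) :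
    invT2 e X kk pp gg (g + g') = invT2 e X kk pp gg g + invT2 e X kk pp gg g' := by
  rw [invT2, invT2, invT2, ← Finset.sum_add_distrib]
  exact Finset.sum_congr rfl fun j _ => by rw [LinearMap.add_apply, mkT_add_right]

lemma tensorToHom2_invT2 (hd2 : ∀ m : M, ∑ j, gg j m • pp j = m)
    (g : (M →ₗ[S] S) →ₗ[R] X) :
    tensorToHom2 e he1 he2 X (invT2 e X kk pp gg g) = g := by
  refine LinearMap.ext fun f => ?_
  rw [invT2, map_sum, LinearMap.sum_apply]
  have h1 : ∀ j ∈ Finset.univ,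
      tensorToHom2 e he1 he2 X (mkT R M X S (pp j)
        (g (e.symm ((unopLinear (R := R)) ∘ₗ gg j)))) f
      = g (e f (pp j) • e.symm ((unopLinear (R := R)) ∘ₗ gg j)) := by
    intro j _
    rw [tensorToHom2_mkT, ← map_smul]
  rw [Finset.sum_congr rfl h1, ← map_sum]
  congr 1
  apply e.injective
  refine LinearMap.ext fun m => ?_
  rw [map_sum]
  have h2 : ∀ j ∈ Finset.univ,
      (e (e f (pp j) • e.symm ((unopLinear (R := R)) ∘ₗ gg j))) m
      = e f (pp j) * unop (gg j m) := by
    intro j _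
    rw [he1' e he1, e.apply_symm_apply]
    rfl
  rw [LinearMap.coe_sum, Finset.sum_apply, Finset.sum_congr rfl h2]
  conv_rhs => rw [← hd2 m]
  rw [map_sum]
  exact Finset.sum_congr rfl fun j _ => by
    rw [map_smul, MulOpposite.smul_eq_mul_unop]

lemma invT2_tensorToHom2 (hd2 : ∀ m : M, ∑ j, gg j m • pp j = m)
    (z : NCT R M X S) :
    invT2 e X kk pp gg (tensorToHom2 e he1 he2 X z) = z := by
  induction z using NCT.ind with
  | h0 =>
      rw [map_zero, invT2]
      exact Finset.sum_eq_zero fun j _ => by rw [LinearMap.zero_apply, mkT_zero_right]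
  | hmk m x =>
      rw [invT2]
      have h1 : ∀ j ∈ Finset.univ,
          mkT R M X S (pp j)
            (tensorToHom2 e he1 he2 X (mkT R M X S m x)
              (e.symm ((unopLinear (R := R)) ∘ₗ gg j)))
          = mkT R M X S (gg j m • pp j) x := by
        intro j _
        rw [tensorToHom2_mkT, e.apply_symm_apply]
        have h : ((unopLinear (R := R)) ∘ₗ gg j) m = unop (gg j m) := rfl
        rw [h, mkT_rel, op_unop]
      rw [Finset.sum_congr rfl h1, ← mkT_sum_left]
      exact congrArg (fun w => mkT R M X S w x) (hd2 m)
  | hadd a b ha hb =>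
      rw [map_add, invT2_add, ha, hb]

lemma tensorToHom2_injective (hd2 : ∀ m : M, ∑ j, gg j m • pp j = m) :
    Function.Injective (tensorToHom2 e he1 he2 X) :=
  Function.LeftInverse.injective (invT2_tensorToHom2 e he1 he2 X kk pp gg hd2)

/-- `M ⊗_R X ≅ Hom_R(N, X)` as `S`-modules. -/
noncomputable def homLinEquiv2 (hd2 : ∀ m : M, ∑ j, gg j m • pp j = m) :
    NCT R M X S ≃ₗ[S] ((M →ₗ[S] S) →ₗ[R] X) :=
  LinearEquiv.ofBijective (tensorToHom2 e he1 he2 X)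
    ⟨tensorToHom2_injective e he1 he2 X kk pp gg hd2,
     fun g => ⟨invT2 e X kk pp gg g, tensorToHom2_invT2 e he1 he2 X kk pp gg hd2 g⟩⟩

variable (Y : Type u) [AddCommGroup Y] [Module S Y]
  (hd2 : ∀ m : M, ∑ j, gg j m • pp j = m)

/-- The adjunction hom-set bijection for `N ⊗_S - ⊣ M ⊗_R -`. -/
noncomputable def homEquiv2 :
    (NCT S (M →ₗ[S] S) Y R →ₗ[R] X) ≃ (Y →ₗ[S] NCT R M X S) where
  toFun g := ((homLinEquiv2 e he1 he2 X kk pp gg hd2).symm.toLinearMap).comp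
    (curryNCT R S (M →ₗ[S] S) Y X g)
  invFun h := uncurryNCT R S (M →ₗ[S] S) Y X
    ((homLinEquiv2 e he1 he2 X kk pp gg hd2).toLinearMap.comp h)
  left_inv g := NCT.hom_ext fun f y => by
    show (homLinEquiv2 e he1 he2 X kk pp gg hd2)
        ((homLinEquiv2 e he1 he2 X kk pp gg hd2).symm
          (curryNCT R S (M →ₗ[S] S) Y X g y)) f
      = g (mkT S (M →ₗ[S] S) Y R f y)
    rw [LinearEquiv.apply_symm_apply]
    rfl
  right_inv h := LinearMap.ext fun y => by
    show (homLinEquiv2 e he1 he2 X kk pp gg hd2).symm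
      (curryNCT R S (M →ₗ[S] S) Y X (uncurryNCT R S (M →ₗ[S] S) Y X
        ((homLinEquiv2 e he1 he2 X kk pp gg hd2).toLinearMap.comp h)) y) = h y
    have h' : curryNCT R S (M →ₗ[S] S) Y X (uncurryNCT R S (M →ₗ[S] S) Y X
        ((homLinEquiv2 e he1 he2 X kk pp gg hd2).toLinearMap.comp h)) y
        = (homLinEquiv2 e he1 he2 X kk pp gg hd2) (h y) := LinearMap.ext fun f => rfl
    rw [h', LinearEquiv.symm_apply_apply]

end Adj2

section TheAdj2
variable (S R M : Type u) [Ring S] [Ring R] [AddCommGroup M]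
  [Module S M] [Module Rᵐᵒᵖ M] [SMulCommClass S Rᵐᵒᵖ M] [SMulCommClass Rᵐᵒᵖ S M]
variable (e : (M →ₗ[S] S) ≃+ (M →ₗ[Rᵐᵒᵖ] R))
  (he1 : ∀ (r : R) (f : M →ₗ[S] S), e (f ∘ₗ ract S R M r) = mulLeft' R r ∘ₗ e f)
  (he2 : ∀ (s : S) (f : M →ₗ[S] S),
      e (LinearMap.toSpanSingleton S S s ∘ₗ f) = e f ∘ₗ lact S R M s)
  (kk : ℕ) (pp : Fin kk → M) (gg : Fin kk → (M →ₗ[Rᵐᵒᵖ] Rᵐᵒᵖ))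
  (hd2 : ∀ m : M, ∑ j, gg j m • pp j = m)

/-- The adjunction `N ⊗_S - ⊣ M ⊗_R -`. -/
noncomputable def adj2 : Gtor S R M ⊣ Ftor S R M :=
  Adjunction.mkOfHomEquiv
    { homEquiv := fun Y X => ModuleCat.homEquiv.trans
        ((homEquiv2 e he1 he2 X.carrier kk pp gg Y.carrier hd2).trans
          (ModuleCat.homEquiv (M := Y) (N := (Ftor S R M).obj X)).symm)
      homEquiv_naturality_left_symm := fun {Y' Y X} u h =>
        ModuleCat.hom_ext <| NCT.hom_ext fun f y' => by
        show uncurryNCT R S (M →ₗ[S] S) Y'.carrier X.carrier _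
            (mkT S (M →ₗ[S] S) Y'.carrier R f y')
          = (homEquiv2 e he1 he2 X.carrier kk pp gg Y.carrier hd2).symm h.hom
              (NCTmap u.hom (mkT S (M →ₗ[S] S) Y'.carrier R f y'))
        rw [NCTmap_mkT]
        rfl
      homEquiv_naturality_right := fun {Y X X'} g v =>
        ModuleCat.hom_ext <| LinearMap.ext fun y => by
        show (homLinEquiv2 e he1 he2 X'.carrier kk pp gg hd2).symm
            (curryNCT R S (M →ₗ[S] S) Y.carrier X'.carrier (g ≫ v).hom y)
          = NCTmap v.hom ((homLinEquiv2 e he1 he2 X.carrier kk pp gg hd2).symm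
              (curryNCT R S (M →ₗ[S] S) Y.carrier X.carrier g.hom y))
        apply tensorToHom2_injective e he1 he2 X'.carrier kk pp gg hd2
        have h1 : tensorToHom2 e he1 he2 X'.carrier
            ((homLinEquiv2 e he1 he2 X'.carrier kk pp gg hd2).symm
              (curryNCT R S (M →ₗ[S] S) Y.carrier X'.carrier (g ≫ v).hom y))
            = curryNCT R S (M →ₗ[S] S) Y.carrier X'.carrier (g ≫ v).hom y :=
          (homLinEquiv2 e he1 he2 X'.carrier kk pp gg hd2).apply_symm_apply _
        have h2 : tensorToHom2 e he1 he2 X.carrier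
            ((homLinEquiv2 e he1 he2 X.carrier kk pp gg hd2).symm
              (curryNCT R S (M →ₗ[S] S) Y.carrier X.carrier g.hom y))
            = curryNCT R S (M →ₗ[S] S) Y.carrier X.carrier g.hom y :=
          (homLinEquiv2 e he1 he2 X.carrier kk pp gg hd2).apply_symm_apply _
        show tensorToHom2 e he1 he2 X'.carrier _
          = tensorToHom2 e he1 he2 X'.carrier (NCTmap v.hom _)
        rw [h1]
        refine LinearMap.ext fun f => ?_
        rw [tensorToHom2_nat, h2]
        rfl }

end TheAdj2
section DerivedPart

open CategoryTheory Limits DerivedCategory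

variable {C D : Type (u + 1)} [Category.{u} C] [Category.{u} D] [Abelian C] [Abelian D]

/-- An adjunction between additive functors induces an adjunction between the functors
on cochain complexes. -/
noncomputable def mapCxAdj (F : C ⥤ D) (G : D ⥤ C) [F.Additive] [G.Additive] (adj : F ⊣ G) :
    F.mapHomologicalComplex (ComplexShape.up ℤ) ⊣ G.mapHomologicalComplex (ComplexShape.up ℤ) :=
  Adjunction.mkOfHomEquiv
    { homEquiv := fun K L =>
        { toFun := fun φ =>
            { f := fun i => adj.homEquiv _ _ (φ.f i)
              comm' := fun i j hij => by
                have hc := φ.comm i j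
                simp only [Functor.mapHomologicalComplex_obj_d] at hc ⊢
                exact (adj.homEquiv_naturality_right (φ.f i) (L.d i j)).symm.trans
                  ((congrArg (adj.homEquiv _ _) hc).trans
                    (adj.homEquiv_naturality_left (K.d i j) (φ.f j))) }
          invFun := fun ψ =>
            { f := fun i => (adj.homEquiv _ _).symm (ψ.f i)
              comm' := fun i j hij => by
                have hc := ψ.comm i j
                simp only [Functor.mapHomologicalComplex_obj_d] at hc ⊢
                exact (adj.homEquiv_naturality_right_symm (ψ.f i) (L.d i j)).symm.trans
                  ((congrArg (adj.homEquiv _ _).symm hc).trans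
                    (adj.homEquiv_naturality_left_symm (K.d i j) (ψ.f j))) }
          left_inv := fun φ => by
            ext i
            exact (adj.homEquiv _ _).symm_apply_apply (φ.f i)
          right_inv := fun ψ => by
            ext i
            exact (adj.homEquiv _ _).apply_symm_apply (ψ.f i) }
      homEquiv_naturality_left_symm := fun {K' K L} u h => by
        ext i
        exact Adjunction.homEquiv_naturality_left_symm adj (u.f i) (h.f i)
      homEquiv_naturality_right := fun {K L L'} g v => by
        ext i
        exact Adjunction.homEquiv_naturality_right adj (g.f i) (v.f i) }

variable [HasDerivedCategory.{u + 1} C] [HasDerivedCategory.{u + 1} D]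

/-- Compatibility of the derived functor of an exact functor with the single functors. -/
noncomputable def singleIsoD (F : C ⥤ D) [F.Additive]
    [PreservesFiniteLimits F] [PreservesFiniteColimits F] (X : C) :
    F.mapDerivedCategory.obj ((DerivedCategory.singleFunctor C 0).obj X)
      ≅ (DerivedCategory.singleFunctor D 0).obj (F.obj X) :=
  F.mapDerivedCategoryFactors.app ((CochainComplex.singleFunctor C 0).obj X) ≪≫
    DerivedCategory.Q.mapIso
      ((HomologicalComplex.singleMapHomologicalComplex F (ComplexShape.up ℤ) 0).app X)

end DerivedPart
section ExtEquiv

open CategoryTheory Limits DerivedCategory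

variable {C D : Type (u + 1)} [Category.{u} C] [Category.{u} D] [Abelian C] [Abelian D]
  [HasDerivedCategory.{u + 1} C] [HasDerivedCategory.{u + 1} D]

lemma extNonempty (F : C ⥤ D) (G : D ⥤ C) [F.Additive] [G.Additive]
    (adj : F ⊣ G) (adj' : G ⊣ F)
    [HasExt.{u + 1} C] [HasExt.{u + 1} D]
    (X : C) (Y : D) (i : ℕ) :
    Nonempty (Abelian.Ext.{u + 1} (F.obj X) Y i ≃+ Abelian.Ext.{u + 1} X (G.obj Y) i) := by
  haveI : PreservesLimitsOfSize.{0, 0} F := adj'.rightAdjoint_preservesLimits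
  haveI : PreservesColimitsOfSize.{0, 0} F := adj.leftAdjoint_preservesColimits
  haveI : PreservesLimitsOfSize.{0, 0} G := adj.rightAdjoint_preservesLimits
  haveI : PreservesColimitsOfSize.{0, 0} G := adj'.leftAdjoint_preservesColimits
  haveI : PreservesFiniteLimits F := PreservesLimitsOfSize.preservesFiniteLimits F
  haveI : PreservesFiniteColimits F := PreservesColimitsOfSize.preservesFiniteColimits F
  haveI : PreservesFiniteLimits G := PreservesLimitsOfSize.preservesFiniteLimits G
  haveI : PreservesFiniteColimits G := PreservesColimitsOfSize.preservesFiniteColimits G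
  haveI : CatCommSq (F.mapHomologicalComplex (ComplexShape.up ℤ))
      DerivedCategory.Q DerivedCategory.Q F.mapDerivedCategory :=
    ⟨F.mapDerivedCategoryFactors.symm⟩
  haveI : CatCommSq (G.mapHomologicalComplex (ComplexShape.up ℤ))
      DerivedCategory.Q DerivedCategory.Q G.mapDerivedCategory :=
    ⟨G.mapDerivedCategoryFactors.symm⟩
  let adjD : F.mapDerivedCategory ⊣ G.mapDerivedCategory :=
    (mapCxAdj F G adj).localization DerivedCategory.Q
      (HomologicalComplex.quasiIso C (ComplexShape.up ℤ)) DerivedCategory.Q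
      (HomologicalComplex.quasiIso D (ComplexShape.up ℤ))
      F.mapDerivedCategory G.mapDerivedCategory
  let α : (singleFunctor D 0).obj (F.obj X) ≅
      F.mapDerivedCategory.obj ((singleFunctor C 0).obj X) := (singleIsoD F X).symm
  let β : G.mapDerivedCategory.obj ((((singleFunctor D 0).obj Y))⟦(i : ℤ)⟧) ≅
      (((singleFunctor C 0).obj (G.obj Y))⟦(i : ℤ)⟧) :=
    (G.mapDerivedCategory.commShiftIso (i : ℤ)).app ((singleFunctor D 0).obj Y) ≪≫
      (shiftFunctor _ (i : ℤ)).mapIso (singleIsoD G Y)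
  let mid1 : ((singleFunctor D 0).obj (F.obj X) ⟶ (((singleFunctor D 0).obj Y)⟦(i : ℤ)⟧)) ≃+
      (F.mapDerivedCategory.obj ((singleFunctor C 0).obj X) ⟶
        (((singleFunctor D 0).obj Y)⟦(i : ℤ)⟧)) :=
    AddEquiv.mk' (α.homCongr (Iso.refl _))
      (fun f g => by
        simp only [Iso.homCongr, Equiv.coe_fn_mk, Iso.refl_hom, Category.comp_id,
          Preadditive.comp_add])
  let mid2 : (F.mapDerivedCategory.obj ((singleFunctor C 0).obj X) ⟶
        (((singleFunctor D 0).obj Y)⟦(i : ℤ)⟧)) ≃+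
      ((singleFunctor C 0).obj X ⟶
        G.mapDerivedCategory.obj ((((singleFunctor D 0).obj Y)⟦(i : ℤ)⟧))) :=
    AddEquiv.mk' (adjD.homEquiv _ _)
      (fun f g => by
        simp only [Adjunction.homEquiv_unit, Functor.map_add, Preadditive.comp_add])
  let mid3 : ((singleFunctor C 0).obj X ⟶
        G.mapDerivedCategory.obj ((((singleFunctor D 0).obj Y)⟦(i : ℤ)⟧))) ≃+
      ((singleFunctor C 0).obj X ⟶ (((singleFunctor C 0).obj (G.obj Y))⟦(i : ℤ)⟧)) :=
    AddEquiv.mk' ((Iso.refl _).homCongr β)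
      (fun f g => by
        simp only [Iso.homCongr, Equiv.coe_fn_mk, Iso.refl_inv, Category.id_comp,
          Preadditive.add_comp])
  let mid : ShiftedHom ((singleFunctor D 0).obj (F.obj X)) ((singleFunctor D 0).obj Y)
        (i : ℤ) ≃+
      ShiftedHom ((singleFunctor C 0).obj X) ((singleFunctor C 0).obj (G.obj Y)) (i : ℤ) :=
    mid1.trans (mid2.trans mid3)
  exact ⟨(Abelian.Ext.homAddEquiv).trans (mid.trans (Abelian.Ext.homAddEquiv).symm)⟩

end ExtEquiv
theorem stmt4 (S R M : Type u) [Ring S] [Ring R] [AddCommGroup M]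
    [Module S M] [Module Rᵐᵒᵖ M] [SMulCommClass S Rᵐᵒᵖ M] [SMulCommClass Rᵐᵒᵖ S M]
    (hM : IsFrobeniusBimodule S R M)
    (X : Type u) [AddCommGroup X] [Module R X]
    (Y : Type u) [AddCommGroup Y] [Module S Y] :
    letI : HasDerivedCategory.{u+1} (ModuleCat.{u} R) :=
      MorphismProperty.HasLocalization.standard _
    letI : HasDerivedCategory.{u+1} (ModuleCat.{u} S) :=
      MorphismProperty.HasLocalization.standard _
    haveI : HasExt.{u+1} (ModuleCat.{u} R) := hasExt_of_hasDerivedCategory _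
    haveI : HasExt.{u+1} (ModuleCat.{u} S) := hasExt_of_hasDerivedCategory _
    ∀ i : ℕ,
      Nonempty
        (Abelian.Ext.{u+1} (ModuleCat.of S (NCT R M X S)) (ModuleCat.of S Y) i ≃+
          Abelian.Ext.{u+1} (ModuleCat.of R X) (ModuleCat.of R (NCT S (M →ₗ[S] S) Y R)) i) ∧
      Nonempty
        (Abelian.Ext.{u+1} (ModuleCat.of R (NCT S (M →ₗ[S] S) Y R)) (ModuleCat.of R X) i ≃+
          Abelian.Ext.{u+1} (ModuleCat.of S Y) (ModuleCat.of S (NCT R M X S)) i) := by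
  obtain ⟨hfin1, hproj1, hfin2, hproj2, e, he1, he2⟩ := hM
  letI := hfin1
  letI := hproj1
  letI := hfin2
  letI := hproj2
  obtain ⟨nn, mm, ff, hd⟩ := exists_dual_basis S M
  obtain ⟨kk, pp, gg, hd2⟩ := exists_dual_basis Rᵐᵒᵖ M
  letI : HasDerivedCategory.{u+1} (ModuleCat.{u} R) :=
    MorphismProperty.HasLocalization.standard _
  letI : HasDerivedCategory.{u+1} (ModuleCat.{u} S) :=
    MorphismProperty.HasLocalization.standard _
  haveI : HasExt.{u+1} (ModuleCat.{u} R) := hasExt_of_hasDerivedCategory _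
  haveI : HasExt.{u+1} (ModuleCat.{u} S) := hasExt_of_hasDerivedCategory _
  intro i
  constructor
  · exact extNonempty (Ftor S R M) (Gtor S R M) (adj1 S R M nn mm ff hd)
      (adj2 S R M e he1 he2 kk pp gg hd2) (ModuleCat.of R X) (ModuleCat.of S Y) i
  · exact extNonempty (Gtor S R M) (Ftor S R M) (adj2 S R M e he1 he2 kk pp gg hd2)
      (adj1 S R M nn mm ff hd) (ModuleCat.of S Y) (ModuleCat.of R X) i
end

section
/- Let Γ ⊆ Λ be an extension of rings such that the inclusion Γ → Λ is a split monomorphism of left Γ-modules, and suppose that Λ is projective as a left Γ-module and as a right Γ-module. Then domdim(Γ) ≥ domdim(Λ). -/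
/-!
Statement 10: Let `Γ ⊆ Λ` be a left-split extension of rings such that `Λ` is projective
as a left and as a right `Γ`-module.  Then `domdim(Γ) ≥ domdim(Λ)`.
-/

universe u
open MulOpposite
/-- `domdimGE R n M` holds iff there is an exact sequence
`0 → M → I^0 → ⋯ → I^(n-1)` of left `R`-modules in which every `I^j` is both
projective and injective; i.e. the dominant dimension of `M` is at least `n`. -/
def domdimGE (R : Type u) [Ring R] :
    ℕ → (M : Type u) → [AddCommGroup M] → [Module R M] → Prop
  | 0, _, _, _ => True
  | (n+1), M, iM, mM =>
      letI := iM; letI := mM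
      ∃ (I : Type u) (_ : AddCommGroup I) (_ : Module R I),
        Module.Projective R I ∧ Module.Injective R I ∧
        ∃ f : M →ₗ[R] I, Function.Injective f ∧ domdimGE R n (I ⧸ LinearMap.range f)
section SubringExtension

variable {Λ : Type u} [Ring Λ] (Γ : Subring Λ)

/-- `Λ` as a right `Γ`-module, i.e. as a left module over `Γᵐᵒᵖ`, for a subring `Γ ⊆ Λ`. -/
instance subringOpModule : Module (↥Γ)ᵐᵒᵖ Λ where
  smul g x := x * (g.unop : Λ)
  one_smul x := mul_one x
  mul_smul g g' x := (mul_assoc x _ _).symm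
  smul_zero g := zero_mul _
  smul_add g x y := add_mul x y _
  add_smul g g' x := by
    show x * ((unop (g + g') : ↥Γ) : Λ) = x * ((unop g : ↥Γ) : Λ) + x * ((unop g' : ↥Γ) : Λ)
    rw [unop_add, Subring.coe_add, mul_add]
  zero_smul x := by
    show x * ((unop (0 : (↥Γ)ᵐᵒᵖ) : ↥Γ) : Λ) = 0
    rw [unop_zero, ZeroMemClass.coe_zero, mul_zero]

/-- The extension `Γ ⊆ Λ` is left-split if the inclusion is a split monomorphism of left
`Γ`-modules. -/
def IsLeftSplitExtension : Prop :=
  ∃ π : Λ →ₗ[↥Γ] ↥Γ, ∀ g : ↥Γ, π (g : Λ) = g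

end SubringExtension


set_option maxHeartbeats 1600000
set_option synthInstance.maxHeartbeats 400000

section Generic
variable {R : Type u} [Ring R]

theorem domdimGE_congr : ∀ (n : ℕ) {M N : Type u} [AddCommGroup M] [Module R M]
    [AddCommGroup N] [Module R N], (M ≃ₗ[R] N) → domdimGE R n M → domdimGE R n N
  | 0, _, _, _, _, _, _, _, _ => trivial
  | (n+1), M, N, _, _, _, _, e, ⟨I, iI, mI, hp, hi, f, hf, hd⟩ => by
    refine ⟨I, iI, mI, hp, hi, f.comp e.symm.toLinearMap, hf.comp e.symm.injective, ?_⟩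
    have hr : LinearMap.range (f.comp e.symm.toLinearMap) = LinearMap.range f := by
      rw [LinearMap.range_comp, LinearEquiv.range, Submodule.map_top]
    exact domdimGE_congr n (Submodule.quotEquivOfEq _ _ hr.symm) hd

theorem domdimGE_of_subsingleton : ∀ (n : ℕ) (M : Type u) [AddCommGroup M] [Module R M]
    [Subsingleton M], domdimGE R n M
  | 0, _, _, _, _ => trivial
  | (n+1), M, iM, mM, sM => by
    have hp : Module.Projective R M := by
      rw [Module.projective_def']
      exact ⟨0, by ext x; exact Subsingleton.elim _ _⟩
    have hi : Module.Injective R M := by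
      constructor
      intro X Y _ _ _ _ f hf g
      exact ⟨0, fun x => Subsingleton.elim _ _⟩
    refine ⟨M, iM, mM, hp, hi, LinearMap.id, fun a b _ => Subsingleton.elim a b, ?_⟩
    haveI : Subsingleton (M ⧸ LinearMap.range (LinearMap.id (R := R) (M := M))) :=
      ⟨fun a b => by
        obtain ⟨x, rfl⟩ := Submodule.Quotient.mk_surjective _ a
        obtain ⟨y, rfl⟩ := Submodule.Quotient.mk_surjective _ b
        exact congrArg _ (Subsingleton.elim x y)⟩
    exact domdimGE_of_subsingleton n _

theorem domdimGE_of_projinj : ∀ (n : ℕ) (M : Type u) [AddCommGroup M] [Module R M],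
    Module.Projective R M → Module.Injective R M → domdimGE R n M
  | 0, _, _, _, _, _ => trivial
  | (n+1), M, iM, mM, hp, hi => by
    refine ⟨M, iM, mM, hp, hi, LinearMap.id, fun a b h => h, ?_⟩
    have : Subsingleton (M ⧸ LinearMap.range (LinearMap.id (R := R) (M := M))) := by
      constructor
      intro a b
      obtain ⟨x, rfl⟩ := Submodule.Quotient.mk_surjective _ a
      obtain ⟨y, rfl⟩ := Submodule.Quotient.mk_surjective _ b
      rw [Submodule.Quotient.eq]
      exact ⟨x - y, rfl⟩
    exact domdimGE_of_subsingleton n _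

theorem Module.Injective.prod {M N : Type u} [AddCommGroup M] [Module R M]
    [AddCommGroup N] [Module R N] (hM : Module.Injective R M) (hN : Module.Injective R N) :
    Module.Injective R (M × N) := by
  constructor
  intro X Y _ _ _ _ f hf g
  obtain ⟨h₁, hh₁⟩ := hM.out f hf ((LinearMap.fst R M N).comp g)
  obtain ⟨h₂, hh₂⟩ := hN.out f hf ((LinearMap.snd R M N).comp g)
  exact ⟨h₁.prod h₂, fun x => by
    simp only [LinearMap.prod_apply, Function.prod, hh₁ x, hh₂ x, LinearMap.comp_apply,
      LinearMap.fst_apply, LinearMap.snd_apply]⟩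

/-- quotient of a product by a product submodule -/
noncomputable def quotProdEquiv {A B : Type u} [AddCommGroup A] [Module R A]
    [AddCommGroup B] [Module R B] (p : Submodule R A) (q : Submodule R B) :
    ((A × B) ⧸ p.prod q) ≃ₗ[R] (A ⧸ p) × (B ⧸ q) := by
  let f : (A × B) →ₗ[R] (A ⧸ p) × (B ⧸ q) :=
    (p.mkQ.comp (LinearMap.fst R A B)).prod (q.mkQ.comp (LinearMap.snd R A B))
  have hker : LinearMap.ker f = p.prod q := by
    ext ⟨x, y⟩
    simp [f, Submodule.mem_prod, Prod.ext_iff, LinearMap.mem_ker,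
      Submodule.Quotient.mk_eq_zero]
  have hsurj : Function.Surjective f := by
    rintro ⟨c, d⟩
    obtain ⟨x, rfl⟩ := Submodule.Quotient.mk_surjective _ c
    obtain ⟨y, rfl⟩ := Submodule.Quotient.mk_surjective _ d
    exact ⟨(x, y), rfl⟩
  exact (Submodule.quotEquivOfEq _ _ hker.symm) ≪≫ₗ LinearMap.quotKerEquivOfSurjective f hsurj

theorem domdimGE_prod : ∀ (n : ℕ) {M N : Type u} [AddCommGroup M] [Module R M]
    [AddCommGroup N] [Module R N], domdimGE R n M → domdimGE R n N → domdimGE R n (M × N)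
  | 0, _, _, _, _, _, _, _, _ => trivial
  | (n+1), M, N, _, _, _, _, ⟨I, iI, mI, hpI, hiI, f, hf, hdf⟩,
      ⟨J, iJ, mJ, hpJ, hiJ, g, hg, hdg⟩ => by
    refine ⟨I × J, inferInstance, inferInstance, inferInstance, hiI.prod hiJ,
      f.prodMap g, fun a b h => ?_, ?_⟩
    · have h1 := congrArg Prod.fst h
      have h2 := congrArg Prod.snd h
      exact Prod.ext (hf h1) (hg h2)
    · have hr : LinearMap.range (f.prodMap g) = (LinearMap.range f).prod (LinearMap.range g) := by
        ext ⟨x, y⟩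
        simp only [LinearMap.mem_range, Submodule.mem_prod, Prod.ext_iff, LinearMap.prodMap_apply,
          Prod.exists]
        constructor
        · rintro ⟨a, b, h1, h2⟩; exact ⟨⟨a, h1⟩, ⟨b, h2⟩⟩
        · rintro ⟨⟨a, h1⟩, ⟨b, h2⟩⟩; exact ⟨a, b, h1, h2⟩
      refine domdimGE_congr n ((Submodule.quotEquivOfEq _ _ hr) ≪≫ₗ
        quotProdEquiv _ _).symm (domdimGE_prod n hdf hdg)

end Generic

section Generic2
variable {R : Type u} [Ring R]

/-- Schanuel-type: cokernel of `(a, b) : N → A × B` is `coker a × B` when `B` is injective. -/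
noncomputable def cokerPairEquiv {N A B : Type u} [AddCommGroup N] [Module R N]
    [AddCommGroup A] [Module R A] [AddCommGroup B] [Module R B]
    (a : N →ₗ[R] A) (b : N →ₗ[R] B) (ha : Function.Injective a)
    (hB : Module.Injective R B) :
    ((A × B) ⧸ LinearMap.range (a.prod b)) ≃ₗ[R] (A ⧸ LinearMap.range a) × B := by
  have hkex := hB.out a ha b
  let k := hkex.choose
  have hk : ∀ x, k (a x) = b x := hkex.choose_spec
  let e : (A × B) ≃ₗ[R] (A × B) :=
    (LinearEquiv.refl R A).skewProd (LinearEquiv.refl R B) (-k)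
  have hmap : (LinearMap.range (a.prod b)).map (e : (A × B) →ₗ[R] (A × B)) = (LinearMap.range a).prod ⊥ := by
    ext ⟨x, y⟩
    simp only [Submodule.mem_map, LinearMap.mem_range, Submodule.mem_prod,
      Submodule.mem_bot]
    constructor
    · rintro ⟨⟨u, v⟩, ⟨n, hn⟩, hevn⟩
      have hu : u = a n := (congrArg Prod.fst hn).symm
      have hv : v = b n := (congrArg Prod.snd hn).symm
      have : (e : (A × B) →ₗ[R] (A × B)) (u, v) = (u, v + -(k u)) := rfl
      rw [this] at hevn
      subst hu hv
      rw [hk n] at hevn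
      refine ⟨⟨n, (congrArg Prod.fst hevn)⟩, ?_⟩
      have := congrArg Prod.snd hevn
      simpa using this.symm
    · rintro ⟨⟨n, hn⟩, hy⟩
      refine ⟨(a n, b n), ⟨n, rfl⟩, ?_⟩
      have : (e : (A × B) →ₗ[R] (A × B)) (a n, b n) = (a n, b n + -(k (a n))) := rfl
      rw [this, hk n]
      ext
      · exact hn
      · simpa using hy.symm
  exact (Submodule.Quotient.equiv _ _ e hmap) ≪≫ₗ (quotProdEquiv _ _) ≪≫ₗ
    (LinearEquiv.refl R _).prodCongr (Submodule.quotEquivOfEqBot ⊥ rfl)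

/-- Dropping a projective-injective second factor. -/
theorem domdimGE_dropProjInj (n : ℕ) {A P : Type u} [AddCommGroup A] [Module R A]
    [AddCommGroup P] [Module R P] (hPp : Module.Projective R P) (hPi : Module.Injective R P)
    (h : domdimGE R n (A × P)) : domdimGE R n A := by
  cases n with
  | zero => trivial
  | succ m =>
    obtain ⟨I, iI, mI, hIp, hIi, f, hfinj, hC⟩ := h
    set g : A →ₗ[R] I := f.comp (LinearMap.inl R A P) with hg
    have hginj : Function.Injective g := by
      intro x y hxy
      have := hfinj hxy
      exact congrArg Prod.fst this
    refine ⟨I, iI, mI, hIp, hIi, g, hginj, ?_⟩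
    -- X := I ⧸ range g ; show X ≃ P × C with C := I ⧸ range f
    set pg := LinearMap.range g with hpg
    set pf := LinearMap.range f with hpf
    have hle : pg ≤ pf := by
      rintro x ⟨a, rfl⟩; exact ⟨(a, 0), rfl⟩
    let s : P →ₗ[R] (I ⧸ pg) := pg.mkQ.comp (f.comp (LinearMap.inr R A P))
    have hsinj : Function.Injective s := by
      intro p q hpq
      have hmem : f (0, p - q) ∈ pg := by
        have h0 : pg.mkQ (f (0, p - q)) = 0 := by
          have hfs : f (0, p - q) = f (0, p) - f (0, q) := by
            rw [← map_sub]; congr 1; simp [Prod.ext_iff]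
          rw [hfs, map_sub]
          exact sub_eq_zero_of_eq hpq
        rwa [Submodule.mkQ_apply, Submodule.Quotient.mk_eq_zero] at h0
      obtain ⟨a, ha⟩ := hmem
      have ha' : f (a, 0) = f (0, p - q) := ha
      have h2 : ((a, (0 : P)) : A × P) = ((0 : A), p - q) := hfinj ha'
      have h3 : (0 : P) = p - q := congrArg Prod.snd h2
      rw [eq_comm, sub_eq_zero] at h3
      exact h3
    obtain ⟨r, hr⟩ := hPi.out s hsinj (LinearMap.id)
    let t : (I ⧸ pg) →ₗ[R] (I ⧸ pf) := Submodule.mapQ pg pf LinearMap.id hle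
    have hts : ∀ p : P, t (s p) = 0 := by
      intro p
      show t (pg.mkQ (f (0, p))) = 0
      have : t (pg.mkQ (f (0, p))) = pf.mkQ (f (0, p)) := by
        simp [t, Submodule.mapQ_apply]
      rw [this, Submodule.mkQ_apply, Submodule.Quotient.mk_eq_zero]
      exact ⟨(0, p), rfl⟩
    have htmk : ∀ x : I, t (pg.mkQ x) = pf.mkQ x := by
      intro x; simp [t, Submodule.mapQ_apply]
    let F : (I ⧸ pg) →ₗ[R] P × (I ⧸ pf) := r.prod t
    have hFbij : Function.Bijective F := by
      constructor
      · intro x y hxy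
        obtain ⟨u, rfl⟩ := Submodule.Quotient.mk_surjective _ x
        obtain ⟨v, rfl⟩ := Submodule.Quotient.mk_surjective _ y
        have h1 : r (Submodule.Quotient.mk u) = r (Submodule.Quotient.mk v) :=
          congrArg Prod.fst hxy
        have h2 : t (Submodule.Quotient.mk u) = t (Submodule.Quotient.mk v) :=
          congrArg Prod.snd hxy
        -- from h2 : u - v ∈ pf
        have huv : u - v ∈ pf := by
          have : pf.mkQ (u - v) = 0 := by
            rw [map_sub]
            have hu := htmk u; have hv := htmk v
            rw [Submodule.mkQ_apply] at hu hv
            rw [← hu, ← hv, h2, sub_self]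
          rwa [Submodule.mkQ_apply, Submodule.Quotient.mk_eq_zero] at this
        obtain ⟨⟨a, p⟩, hap⟩ := huv
        -- u - v = f (a, p) = f(a,0) + f(0,p); so mk u - mk v = s p
        have hmk : (Submodule.Quotient.mk u : I ⧸ pg) - Submodule.Quotient.mk v = s p := by
          rw [← Submodule.mkQ_apply, ← Submodule.mkQ_apply, ← map_sub, ← hap]
          have : f (a, p) = f (a, 0) + f (0, p) := by
            rw [← map_add]; congr 1; simp
          rw [this, map_add]
          have : pg.mkQ (f (a, 0)) = 0 := by
            rw [Submodule.mkQ_apply, Submodule.Quotient.mk_eq_zero]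
            exact ⟨a, rfl⟩
          rw [this, zero_add]
          rfl
        have hp0 : p = 0 := by
          have := congrArg r hmk
          rw [map_sub, h1, sub_self] at this
          have h3 : r (s p) = p := hr p
          rw [h3] at this
          exact this.symm
        rw [hp0, map_zero] at hmk
        exact sub_eq_zero.mp hmk
      · rintro ⟨p, c⟩
        obtain ⟨y, rfl⟩ := Submodule.Quotient.mk_surjective _ c
        set x0 : I ⧸ pg := Submodule.Quotient.mk y with hx0
        refine ⟨x0 - s (r x0) + s p, ?_⟩
        have hF : F (x0 - s (r x0) + s p) =
            (r x0 - r (s (r x0)) + r (s p), t x0 - t (s (r x0)) + t (s p)) := by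
          simp [F, map_add, map_sub]
        rw [hF, hr, hr, hts, hts]
        ext
        · simp
        · show t x0 - 0 + 0 = Submodule.Quotient.mk y
          rw [sub_zero, add_zero, hx0, ← Submodule.mkQ_apply, htmk, Submodule.mkQ_apply]
    -- now transfer
    have hPC : domdimGE R m (P × (I ⧸ pf)) :=
      domdimGE_prod m (domdimGE_of_projinj m P hPp hPi) hC
    exact domdimGE_congr m (LinearEquiv.ofBijective F hFbij).symm hPC

/-- Dominant dimension bound passes to direct summands (split monomorphisms). -/
theorem domdimGE_of_split_mono : ∀ (n : ℕ) {M N : Type u} [AddCommGroup M] [Module R M]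
    [AddCommGroup N] [Module R N] (i : M →ₗ[R] N) (p : N →ₗ[R] M),
    (∀ m, p (i m) = m) → domdimGE R n N → domdimGE R n M
  | 0, _, _, _, _, _, _ => fun _ _ _ _ => trivial
  | (n+1), M, N, _, _, _, _ => fun i p hpi h => by
    obtain ⟨I, iI, mI, hIp, hIi, f, hfinj, hC⟩ := h
    have hiinj : Function.Injective i := fun x y hxy => by
      rw [← hpi x, ← hpi y, hxy]
    -- complement K = ker p, with N ≃ M × K
    set K := LinearMap.ker p with hK
    let w : N →ₗ[R] M × K := p.prod ((LinearMap.id - i.comp p).codRestrict K (by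
      intro n
      simp [K, LinearMap.mem_ker, map_sub, hpi]))
    let w' : M × K →ₗ[R] N := i.comp (LinearMap.fst R M K) + K.subtype.comp (LinearMap.snd R M K)
    have hww' : ∀ x : M × K, w (w' x) = x := by
      rintro ⟨m, ⟨k, hk⟩⟩
      have h1 : p (i m + k) = m := by
        rw [map_add, hpi, (LinearMap.mem_ker).mp hk, add_zero]
      refine Prod.ext ?_ ?_
      · show p (i m + k) = m
        exact h1
      · apply Subtype.ext
        show (i m + k) - i (p (i m + k)) = k
        rw [h1]
        abel
    have hw'w : ∀ x : N, w' (w x) = x := by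
      intro x
      show i (p x) + (x - i (p x)) = x
      abel
    let u : N ≃ₗ[R] M × K := LinearEquiv.ofLinear w w'
      (LinearMap.ext hww') (LinearMap.ext hw'w)
    -- monos
    let g : M →ₗ[R] I := f.comp i
    have hginj : Function.Injective g := fun x y hxy => hiinj (hfinj hxy)
    let g' : K →ₗ[R] I := f.comp K.subtype
    have hg'inj : Function.Injective g' := fun x y hxy => Subtype.ext (hfinj hxy)
    let b : N →ₗ[R] I × I := (g.prodMap g').comp u.toLinearMap
    have hbinj : Function.Injective b := by
      intro x y hxy
      apply u.injective
      have h1 := congrArg Prod.fst hxy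
      have h2 := congrArg Prod.snd hxy
      exact Prod.ext (hginj h1) (hg'inj h2)
    -- Schanuel both ways for (f, b) : N → I × (I × I)
    have hIIi : Module.Injective R (I × I) := hIi.prod hIi
    let E1 := cokerPairEquiv f b hfinj hIIi
    -- swap to get the other one
    let sw : (I × (I × I)) ≃ₗ[R] ((I × I) × I) := LinearEquiv.prodComm R I (I × I)
    have hmapsw : (LinearMap.range (f.prod b)).map (sw : (I × (I × I)) →ₗ[R] ((I × I) × I)) = LinearMap.range (b.prod f) := by
      ext ⟨x, y⟩
      simp only [Submodule.mem_map, LinearMap.mem_range]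
      constructor
      · rintro ⟨z, ⟨n, rfl⟩, h⟩; exact ⟨n, by rw [← h]; rfl⟩
      · rintro ⟨n, h⟩; exact ⟨(f n, b n), ⟨n, rfl⟩, by rw [← h]; rfl⟩
    let E2 := (Submodule.Quotient.equiv _ _ sw hmapsw) ≪≫ₗ cokerPairEquiv b f hbinj hIi
    -- coker b ≃ X × X'
    have hrangeb : LinearMap.range b = (LinearMap.range g).prod (LinearMap.range g') := by
      ext ⟨x, y⟩
      simp only [LinearMap.mem_range, Submodule.mem_prod]
      constructor
      · rintro ⟨n, h⟩
        exact ⟨⟨(u n).1, congrArg Prod.fst h⟩, ⟨(u n).2, congrArg Prod.snd h⟩⟩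
      · rintro ⟨⟨a1, h1⟩, ⟨a2, h2⟩⟩
        refine ⟨u.symm (a1, a2), ?_⟩
        show (g.prodMap g') (u (u.symm (a1, a2))) = (x, y)
        rw [u.apply_symm_apply]
        exact Prod.ext h1 h2
    let E3 : ((I × I) ⧸ LinearMap.range b) ≃ₗ[R]
        (I ⧸ LinearMap.range g) × (I ⧸ LinearMap.range g') :=
      (Submodule.quotEquivOfEq _ _ hrangeb) ≪≫ₗ quotProdEquiv _ _
    -- assemble: C × (I×I) ≃ coker(f,b) ≃ (X × X') × I
    have hCII : domdimGE R n ((I ⧸ LinearMap.range f) × (I × I)) :=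
      domdimGE_prod n hC (domdimGE_of_projinj n _ inferInstance hIIi)
    have hbig : domdimGE R n
        (((I ⧸ LinearMap.range g) × (I ⧸ LinearMap.range g')) × I) := by
      refine domdimGE_congr n ?_ hCII
      exact E1.symm ≪≫ₗ E2 ≪≫ₗ (E3.prodCongr (LinearEquiv.refl R I))
    -- drop I, then drop X'
    have hXX' : domdimGE R n ((I ⧸ LinearMap.range g) × (I ⧸ LinearMap.range g')) :=
      domdimGE_dropProjInj n hIp hIi hbig
    have hX : domdimGE R n (I ⧸ LinearMap.range g) :=
      domdimGE_of_split_mono n (LinearMap.inl R _ _) (LinearMap.fst R _ _) (fun _ => rfl) hXX'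
    exact ⟨I, iI, mI, hIp, hIi, g, hginj, hX⟩

end Generic2

section Restriction
variable {Λ : Type u} [Ring Λ] (Γ : Subring Λ)

/-- Restriction of a projective module along a projective ring extension is projective. -/
theorem resProjective (hleftproj : Module.Projective ↥Γ Λ)
    (M : Type u) [AddCommGroup M] [Module Λ M] (hM : Module.Projective Λ M) :
    letI := Module.compHom M (Subring.subtype Γ); Module.Projective ↥Γ M := by
  letI := Module.compHom M (Subring.subtype Γ)
  classical
  obtain ⟨s, hs⟩ := (Module.projective_def' (R := Λ) (P := M)).mp hM
  haveI := hleftproj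
  haveI hPA : Module.Projective ↥Γ (M →₀ Λ) := by
    haveI : Module.Projective ↥Γ (Π₀ _ : M, Λ) := inferInstance
    exact Module.Projective.of_equiv (finsuppLequivDFinsupp (R := ↥Γ) (M := Λ) (ι := M)).symm
  let i : M →ₗ[↥Γ] (M →₀ Λ) :=
    { toFun := s
      map_add' := s.map_add
      map_smul' := fun γ m => by
        show s ((γ : Λ) • m) = γ • s m
        rw [map_smul]
        rfl }
  let pr : (M →₀ Λ) →ₗ[↥Γ] M :=
    { toFun := Finsupp.linearCombination Λ _root_.id
      map_add' := map_add _
      map_smul' := fun γ f => by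
        show (Finsupp.linearCombination Λ _root_.id) ((γ : Λ) • f) = (γ : Λ) • _
        rw [map_smul] }
  refine Module.Projective.of_split i pr ?_
  ext m
  exact DFunLike.congr_fun hs m

/-- Restriction of an injective module is injective when `Λ` is projective as a right
`Γ`-module; proved via Baer's criterion and a dual basis. -/
theorem resInjective (hrightproj : Module.Projective (↥Γ)ᵐᵒᵖ Λ)
    (I : Type u) [AddCommGroup I] [Module Λ I] (hI : Module.Injective Λ I) :
    letI := Module.compHom I (Subring.subtype Γ); Module.Injective ↥Γ I := by
  letI := Module.compHom I (Subring.subtype Γ)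
  apply Module.Baer.injective
  intro J φ
  classical
  obtain ⟨s, hs⟩ := (Module.projective_def' (R := (↥Γ)ᵐᵒᵖ) (P := Λ)).mp hrightproj
  have hs' : ∀ x : Λ, (s x).sum (fun a c => c • a) = x := by
    intro x
    have h := DFunLike.congr_fun hs x
    simpa [Finsupp.linearCombination_apply] using h
  have hs'' : ∀ x : Λ, (s x).sum (fun a c => a * ((unop c : ↥Γ) : Λ)) = x := fun x => hs' x
  set φ' : ↥Γ → I := fun γ => if h : γ ∈ J then φ ⟨γ, h⟩ else 0 with hφ'def
  have hφ'J : ∀ (γ : ↥Γ) (h : γ ∈ J), φ' γ = φ ⟨γ, h⟩ := fun γ h => dif_pos h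
  have hφ'0 : φ' 0 = 0 := by
    rw [hφ'J 0 J.zero_mem]
    have : (⟨0, J.zero_mem⟩ : J) = 0 := rfl
    rw [this, map_zero]
  have hφ'add : ∀ (v w : ↥Γ), v ∈ J → w ∈ J → φ' (v + w) = φ' v + φ' w := by
    intro v w hv hw
    rw [hφ'J _ (J.add_mem hv hw), hφ'J _ hv, hφ'J _ hw]
    have : (⟨v + w, J.add_mem hv hw⟩ : J) = ⟨v, hv⟩ + ⟨w, hw⟩ := rfl
    rw [this, map_add]
  set F : Λ → I := fun x => (s x).sum (fun a c => a • φ' (unop c)) with hFdef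
  have hF0 : F 0 = 0 := by
    show (s 0).sum (fun a c => a • φ' (unop c)) = 0
    rw [map_zero, Finsupp.sum_zero_index]
  have hzero : ∀ a : Λ, a • φ' (unop (0 : (↥Γ)ᵐᵒᵖ)) = 0 := fun a => by
    rw [unop_zero, hφ'0, smul_zero]
  -- key: F (λ · j) = λ • φ j for j ∈ J
  have hFmul : ∀ (lam : Λ) (j : ↥Γ) (hj : j ∈ J), F (lam * (j : Λ)) = lam • φ ⟨j, hj⟩ := by
    intro lam j hj
    have h1 : lam * (j : Λ) = (op j) • lam := rfl
    show (s (lam * (j : Λ))).sum (fun a c => a • φ' (unop c)) = lam • φ ⟨j, hj⟩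
    rw [h1, map_smul]
    rw [Finsupp.sum_smul_index' hzero]
    have hpt : ∀ (a : Λ) (c : (↥Γ)ᵐᵒᵖ),
        a • φ' (unop ((op j) • c)) = (a * ((unop c : ↥Γ) : Λ)) • φ ⟨j, hj⟩ := by
      intro a c
      have h2 : unop ((op j) • c) = unop c * j := by
        show unop ((op j) * c) = unop c * j
        rw [unop_mul, unop_op]
      rw [h2]
      have hmem : unop c * j ∈ J := J.smul_mem (unop c) hj
      rw [hφ'J _ hmem]
      have h3 : (⟨unop c * j, hmem⟩ : J) = (unop c) • (⟨j, hj⟩ : J) := rfl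
      rw [h3, map_smul]
      have h4 : (unop c : ↥Γ) • φ ⟨j, hj⟩ = ((unop c : ↥Γ) : Λ) • φ ⟨j, hj⟩ := rfl
      rw [h4, smul_smul]
    have step1 : (s lam).sum (fun a c => a • φ' (unop ((op j) • c)))
        = (s lam).sum (fun a c => (a * ((unop c : ↥Γ) : Λ)) • φ ⟨j, hj⟩) :=
      Finsupp.sum_congr (fun a _ => hpt a (s lam a))
    rw [step1]
    have step2 : (s lam).sum (fun a c => (a * ((unop c : ↥Γ) : Λ)) • φ ⟨j, hj⟩)
        = ((s lam).sum (fun a c => a * ((unop c : ↥Γ) : Λ))) • φ ⟨j, hj⟩ := by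
      let T : Λ →+ I := (smulAddHom Λ I).flip (φ ⟨j, hj⟩)
      exact (map_finsuppSum T (s lam) (fun a c => a * ((unop c : ↥Γ) : Λ))).symm
    rw [step2, hs'' lam]
  -- membership of dual-basis coefficients
  have hmemJ : ∀ x ∈ Submodule.span Λ (((↑) : ↥Γ → Λ) '' (J : Set ↥Γ)),
      ∀ (lam : Λ) (a : Λ), unop (s (lam * x) a) ∈ J := by
    intro x hx
    induction hx using Submodule.span_induction with
    | mem y hy =>
      obtain ⟨j, hjJ, rfl⟩ := hy
      intro lam a
      have h1 : lam * (j : Λ) = (op j) • lam := rfl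
      rw [h1, map_smul]
      have h2 : ((op j) • s lam) a = (op j) • (s lam a) := rfl
      rw [h2]
      have h3 : unop ((op j) • (s lam a)) = unop (s lam a) * j := by
        show unop ((op j) * (s lam a)) = unop (s lam a) * j
        rw [unop_mul, unop_op]
      rw [h3]
      exact J.smul_mem _ hjJ
    | zero =>
      intro lam a
      rw [mul_zero, map_zero]
      exact J.zero_mem
    | add y z _ _ hy hz =>
      intro lam a
      rw [mul_add, map_add]
      have : (s (lam * y) + s (lam * z)) a = s (lam * y) a + s (lam * z) a := rfl
      rw [this, unop_add]
      exact J.add_mem (hy lam a) (hz lam a)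
    | smul μ y _ hy =>
      intro lam a
      have : lam * (μ • y) = (lam * μ) * y := by
        rw [smul_eq_mul, mul_assoc]
      rw [this]
      exact hy (lam * μ) a
  -- additivity of F where coefficients lie in J
  have hFadd : ∀ x y : Λ, (∀ a, unop (s x a) ∈ J) → (∀ a, unop (s y a) ∈ J) →
      F (x + y) = F x + F y := by
    intro x y hx hy
    have hxy : ∀ a, unop (s (x + y) a) ∈ J := by
      intro a
      rw [map_add]
      have : (s x + s y) a = s x a + s y a := rfl
      rw [this, unop_add]
      exact J.add_mem (hx a) (hy a)
    set T : Finset Λ := (s x).support ∪ (s y).support with hT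
    have hsub : (s (x + y)).support ⊆ T := by
      rw [map_add]; exact Finsupp.support_add
    have hzero' : ∀ a ∈ T, a • φ' (unop (0 : (↥Γ)ᵐᵒᵖ)) = 0 := fun a _ => hzero a
    have e1 : F (x + y) = ∑ a ∈ T, a • φ' (unop (s (x + y) a)) := by
      show (s (x+y)).sum (fun a c => a • φ' (unop c)) = _
      exact Finsupp.sum_of_support_subset _ hsub _ hzero'
    have e2 : F x = ∑ a ∈ T, a • φ' (unop (s x a)) := by
      show (s x).sum (fun a c => a • φ' (unop c)) = _
      exact Finsupp.sum_of_support_subset _ Finset.subset_union_left _ hzero'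
    have e3 : F y = ∑ a ∈ T, a • φ' (unop (s y a)) := by
      show (s y).sum (fun a c => a • φ' (unop c)) = _
      exact Finsupp.sum_of_support_subset _ Finset.subset_union_right _ hzero'
    rw [e1, e2, e3, ← Finset.sum_add_distrib]
    refine Finset.sum_congr rfl (fun a _ => ?_)
    have h5 : s (x + y) a = s x a + s y a := by rw [map_add]; rfl
    rw [h5, unop_add, hφ'add _ _ (hx a) (hy a), smul_add]
  -- Λ-linearity of F on the span
  have hFsmul : ∀ x, x ∈ Submodule.span Λ (((↑) : ↥Γ → Λ) '' (J : Set ↥Γ)) →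
      ∀ lam : Λ, F (lam * x) = lam • F x := by
    intro x hx
    induction hx using Submodule.span_induction with
    | mem y hy =>
      obtain ⟨j, hjJ, rfl⟩ := hy
      intro lam
      have hFj : F (j : Λ) = φ ⟨j, hjJ⟩ := by
        have := hFmul 1 j hjJ
        rwa [one_mul, one_smul] at this
      rw [hFmul lam j hjJ, hFj]
    | zero =>
      intro lam
      rw [mul_zero, hF0, smul_zero]
    | add y z hymem hzmem hy hz =>
      intro lam
      have m1 : ∀ a, unop (s (lam * y) a) ∈ J := hmemJ y hymem lam
      have m2 : ∀ a, unop (s (lam * z) a) ∈ J := hmemJ z hzmem lam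
      have m3 : ∀ a, unop (s y a) ∈ J := by
        intro a; have := hmemJ y hymem 1 a; rwa [one_mul] at this
      have m4 : ∀ a, unop (s z a) ∈ J := by
        intro a; have := hmemJ z hzmem 1 a; rwa [one_mul] at this
      rw [mul_add, hFadd _ _ m1 m2, hy lam, hz lam, hFadd _ _ m3 m4, smul_add]
    | smul μ y hymem hy =>
      intro lam
      have h6 : lam * (μ • y) = (lam * μ) * y := by rw [smul_eq_mul, mul_assoc]
      have h7 : (μ • y : Λ) = μ * y := rfl
      rw [h6, hy (lam * μ), h7, hy μ, mul_smul]
  -- package F as a Λ-linear map on the span, extend via injectivity of I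
  set SJ : Submodule Λ Λ := Submodule.span Λ (((↑) : ↥Γ → Λ) '' (J : Set ↥Γ)) with hSJ
  have hFadd' : ∀ z w : SJ, F ((z : Λ) + w) = F z + F w := by
    intro z w
    refine hFadd _ _ ?_ ?_
    · intro a; have := hmemJ z.1 z.2 1 a; rwa [one_mul] at this
    · intro a; have := hmemJ w.1 w.2 1 a; rwa [one_mul] at this
  let F0 : SJ →ₗ[Λ] I :=
    { toFun := fun z => F z.1
      map_add' := fun z w => hFadd' z w
      map_smul' := fun lam z => hFsmul z.1 z.2 lam }
  obtain ⟨Ψ, hΨ⟩ := hI.out SJ.subtype (fun a b h => Subtype.ext h) F0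
  refine ⟨{ toFun := fun γ => Ψ (γ : Λ)
            map_add' := fun γ γ' => by
              show Ψ (((γ : Λ)) + ((γ' : Λ))) = Ψ (γ : Λ) + Ψ (γ' : Λ)
              rw [map_add]
            map_smul' := fun γ γ' => by
              show Ψ ((γ * γ' : ↥Γ) : Λ) = γ • Ψ (γ' : Λ)
              have : ((γ * γ' : ↥Γ) : Λ) = (γ : Λ) • ((γ' : Λ)) := rfl
              rw [this, map_smul]
              rfl }, ?_⟩
  intro x hx
  have hxSJ : (x : Λ) ∈ SJ := Submodule.subset_span ⟨x, hx, rfl⟩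
  have h8 : Ψ ((x : Λ)) = F0 ⟨(x : Λ), hxSJ⟩ := hΨ ⟨(x : Λ), hxSJ⟩
  show Ψ ((x : Λ)) = φ ⟨x, hx⟩
  rw [h8]
  show F (x : Λ) = φ ⟨x, hx⟩
  have := hFmul 1 x hx
  rwa [one_mul, one_smul] at this

end Restriction

section RestrictionDomdim
variable {Λ : Type u} [Ring Λ] (Γ : Subring Λ)

theorem domdimGE_res (hleftproj : Module.Projective ↥Γ Λ)
    (hrightproj : Module.Projective (↥Γ)ᵐᵒᵖ Λ) :
    ∀ (n : ℕ) (M : Type u) [AddCommGroup M] [Module Λ M], domdimGE Λ n M →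
      (letI := Module.compHom M (Subring.subtype Γ); domdimGE ↥Γ n M)
  | 0, _, _, _ => fun _ => trivial
  | (n+1), M, iM, mM => fun h => by
    obtain ⟨I, iI, mI, hp, hi, f, hfinj, hd⟩ := h
    letI := Module.compHom M (Subring.subtype Γ)
    letI mIΓ := Module.compHom I (Subring.subtype Γ)
    refine ⟨I, iI, mIΓ, resProjective Γ hleftproj I hp, resInjective Γ hrightproj I hi, ?_⟩
    let fΓ : M →ₗ[↥Γ] I :=
      { toFun := f
        map_add' := f.map_add
        map_smul' := fun γ m => f.map_smul (γ : Λ) m }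
    refine ⟨fΓ, hfinj, ?_⟩
    have hIH := domdimGE_res hleftproj hrightproj n (I ⧸ LinearMap.range f) hd
    letI := Module.compHom (I ⧸ LinearMap.range f) (Subring.subtype Γ)
    let mkΓ : I →ₗ[↥Γ] (I ⧸ LinearMap.range f) :=
      { toFun := (LinearMap.range f).mkQ
        map_add' := map_add _
        map_smul' := fun γ x => map_smul (LinearMap.range f).mkQ (γ : Λ) x }
    have hle : LinearMap.range fΓ ≤ LinearMap.ker mkΓ := by
      rintro x ⟨m, rfl⟩
      show (LinearMap.range f).mkQ (f m) = 0
      rw [Submodule.mkQ_apply, Submodule.Quotient.mk_eq_zero]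
      exact ⟨m, rfl⟩
    let e : (I ⧸ LinearMap.range fΓ) →ₗ[↥Γ] (I ⧸ LinearMap.range f) :=
      Submodule.liftQ _ mkΓ hle
    have hbij : Function.Bijective e := by
      constructor
      · intro x y hxy
        obtain ⟨u, rfl⟩ := Submodule.Quotient.mk_surjective _ x
        obtain ⟨v, rfl⟩ := Submodule.Quotient.mk_surjective _ y
        have h1 : (LinearMap.range f).mkQ u = (LinearMap.range f).mkQ v := hxy
        have h2 : u - v ∈ LinearMap.range f := by
          have : (LinearMap.range f).mkQ (u - v) = 0 := by
            rw [map_sub, h1, sub_self]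
          rwa [Submodule.mkQ_apply, Submodule.Quotient.mk_eq_zero] at this
        obtain ⟨m, hm⟩ := h2
        rw [Submodule.Quotient.eq]
        exact ⟨m, hm⟩
      · intro c
        obtain ⟨u, rfl⟩ := Submodule.Quotient.mk_surjective _ c
        exact ⟨Submodule.Quotient.mk u, rfl⟩
    exact domdimGE_congr n (LinearEquiv.ofBijective e hbij) hIH

end RestrictionDomdim

theorem stmt10 (Λ : Type u) [Ring Λ] (Γ : Subring Λ)
    (hsplit : IsLeftSplitExtension Γ)
    (hleftproj : Module.Projective ↥Γ Λ)
    (hrightproj : Module.Projective (↥Γ)ᵐᵒᵖ Λ) :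
    ∀ n : ℕ, domdimGE Λ n Λ → domdimGE ↥Γ n ↥Γ := by
  intro n h
  have h1 := domdimGE_res Γ hleftproj hrightproj n Λ h
  have h2 : domdimGE ↥Γ n Λ := by
    refine domdimGE_congr n ?_ h1
    exact AddEquiv.toLinearEquiv (AddEquiv.refl Λ) (fun c x => rfl)
  obtain ⟨π, hπ⟩ := hsplit
  let ι : ↥Γ →ₗ[↥Γ] Λ :=
    { toFun := (↑)
      map_add' := fun _ _ => rfl
      map_smul' := fun γ x => rfl }
  exact domdimGE_of_split_mono n ι π (fun m => hπ m) h2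
end
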